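/- For p ∈ (0,1) and all x, y ∈ ℝⁿ, the p-angular distance satisfies ||x|^(p-1)·x - |y|^(p-1)·y| ≤ |𝒜(x) - 𝒜(y)|, where 𝒜(x) = |x|^(p-1)·x for |x| ≤ 1 and 𝒜(x) = |x|^(1/p - 1)·x for |x| > 1. -/

import Mathlib

open Real RealInnerProductSpace

/-- The two-exponent radial stretch map `𝒜_{a,b}`. -/
noncomputable def radialA (n : ℕ) (a b : ℝ) (x : EuclideanSpace ℝ (Fin n)) :
    EuclideanSpace ℝ (Fin n) :=
  if ‖x‖ ≤ 1 then (‖x‖ ^ (a - 1)) • x else (‖x‖ ^ (b - 1)) • x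

/-- Monotonicity gap: for `q ≥ 1` and `1 ≤ s ≤ t`, `t - s ≤ t^q - s^q`. -/
lemma auxM (q s t : ℝ) (hq : 1 ≤ q) (hs : 1 ≤ s) (hst : s ≤ t) :
    t - s ≤ t ^ q - s ^ q := by
  have hs0 : (0:ℝ) < s := lt_of_lt_of_le one_pos hs
  have ht0 : (0:ℝ) < t := lt_of_lt_of_le hs0 hst
  have hds : (1:ℝ) ≤ t / s := (one_le_div hs0).2 hst
  have h1 : t / s ≤ (t / s) ^ q := by
    nth_rewrite 1 [← Real.rpow_one (t / s)]
    exact Real.rpow_le_rpow_of_exponent_le hds hq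
  have h2 : (t / s) ^ q = t ^ q / s ^ q := Real.div_rpow ht0.le hs0.le q
  have h3 : s ≤ s ^ q := by
    nth_rewrite 1 [← Real.rpow_one s]
    exact Real.rpow_le_rpow_of_exponent_le hs hq
  have h4 : 0 < s ^ q := Real.rpow_pos_of_pos hs0 q
  have h1' : t * s ^ q ≤ s * t ^ q := by
    rw [h2] at h1
    calc t * s ^ q = (t / s) * s ^ q * s := by field_simp
    _ ≤ (t ^ q / s ^ q) * s ^ q * s := by
        apply mul_le_mul_of_nonneg_right (mul_le_mul_of_nonneg_right h1 h4.le) hs0.le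
    _ = s * t ^ q := by field_simp
  nlinarith [mul_le_mul_of_nonneg_left h3 (sub_nonneg.2 hst)]

/-- Scalar gap lemma. -/
lemma scalar_key (p a b : ℝ) (hp0 : 0 < p) (hp1 : p < 1) (ha : 0 ≤ a) (hab : a ≤ b) :
    b ^ p - a ^ p ≤ (if b ≤ 1 then b ^ p else b ^ (1/p)) -
      (if a ≤ 1 then a ^ p else a ^ (1/p)) := by
  have hq : (1:ℝ) ≤ 1 / p := by rw [le_div_iff₀ hp0]; nlinarith
  have hpq : p ≤ 1 / p := by rw [le_div_iff₀ hp0]; nlinarith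
  by_cases hb1 : b ≤ 1
  · rw [if_pos hb1, if_pos (hab.trans hb1)]
  · push_neg at hb1
    rw [if_neg (not_le.2 hb1)]
    by_cases ha1 : a ≤ 1
    · rw [if_pos ha1]
      have : b ^ p ≤ b ^ (1/p) := Real.rpow_le_rpow_of_exponent_le hb1.le hpq
      linarith
    · push_neg at ha1
      rw [if_neg (not_le.2 ha1)]
      have ha1' : (1:ℝ) ≤ a := ha1.le
      have hap : (1:ℝ) ≤ a ^ p := by
        nth_rewrite 1 [← Real.rpow_zero a]
        exact Real.rpow_le_rpow_of_exponent_le ha1' hp0.le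
      have hmono : a ^ p ≤ b ^ p := Real.rpow_le_rpow ha hab hp0.le
      have e1 : (a ^ p) ^ (1/p) = a := by
        rw [← Real.rpow_mul ha, mul_one_div_cancel hp0.ne', Real.rpow_one]
      have e2 : (b ^ p) ^ (1/p) = b := by
        rw [← Real.rpow_mul (ha.trans hab), mul_one_div_cancel hp0.ne', Real.rpow_one]
      have step1 : b ^ p - a ^ p ≤ b - a := by
        have := auxM (1/p) (a ^ p) (b ^ p) hq hap hmono
        rwa [e1, e2] at this
      have step2 : b - a ≤ b ^ (1/p) - a ^ (1/p) := auxM (1/p) a b hq ha1' hab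
      linarith

/-- Squared scalar gap, symmetric in the order. -/
lemma sq_key (p a b : ℝ) (hp0 : 0 < p) (hp1 : p < 1) (ha : 0 ≤ a) (hb : 0 ≤ b) :
    (a ^ p - b ^ p)^2 ≤ ((if a ≤ 1 then a ^ p else a ^ (1/p)) -
      (if b ≤ 1 then b ^ p else b ^ (1/p)))^2 := by
  rcases le_total a b with h | h
  · have h1 := scalar_key p a b hp0 hp1 ha h
    have h2 : a ^ p ≤ b ^ p := Real.rpow_le_rpow ha h hp0.le
    nlinarith
  · have h1 := scalar_key p b a hp0 hp1 hb h
    have h2 : b ^ p ≤ a ^ p := Real.rpow_le_rpow hb h hp0.le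
    nlinarith

/-- Inner-product key lemma. -/
lemma ip_key {E : Type*} [NormedAddCommGroup E] [InnerProductSpace ℝ E]
    (u v : E) (s t s' t' : ℝ) (hs : 0 ≤ s) (ht : 0 ≤ t) (hss' : s ≤ s') (htt' : t ≤ t')
    (h : (s * ‖u‖ - t * ‖v‖)^2 ≤ (s' * ‖u‖ - t' * ‖v‖)^2) :
    ‖s • u - t • v‖ ≤ ‖s' • u - t' • v‖ := by
  have hs' : 0 ≤ s' := hs.trans hss'
  have ht' : 0 ≤ t' := ht.trans htt'
  have hcs : (inner ℝ u v : ℝ) ≤ ‖u‖ * ‖v‖ := real_inner_le_norm u v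
  have e1 : ‖s • u - t • v‖^2 = s^2 * ‖u‖^2 + t^2 * ‖v‖^2 - 2 * (s * t) * (inner ℝ u v : ℝ) := by
    rw [norm_sub_sq_real]
    rw [norm_smul, norm_smul, real_inner_smul_left, real_inner_smul_right]
    simp [abs_of_nonneg hs, abs_of_nonneg ht]
    ring
  have e2 : ‖s' • u - t' • v‖^2 = s'^2 * ‖u‖^2 + t'^2 * ‖v‖^2 - 2 * (s' * t') * (inner ℝ u v : ℝ) := by
    rw [norm_sub_sq_real]
    rw [norm_smul, norm_smul, real_inner_smul_left, real_inner_smul_right]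
    simp [abs_of_nonneg hs', abs_of_nonneg ht']
    ring
  have hst : s * t ≤ s' * t' := mul_le_mul hss' htt' ht hs'
  have hsq : ‖s • u - t • v‖^2 ≤ ‖s' • u - t' • v‖^2 := by
    rw [e1, e2]
    nlinarith [mul_le_mul_of_nonneg_left hcs (sub_nonneg.2 hst)]
  have := Real.sqrt_le_sqrt hsq
  rwa [Real.sqrt_sq (norm_nonneg _), Real.sqrt_sq (norm_nonneg _)] at this

theorem stmt_17 (n : ℕ) (p : ℝ) (hp : p ∈ Set.Ioo (0:ℝ) 1)
    (x y : EuclideanSpace ℝ (Fin n)) :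
    ‖(‖x‖ ^ (p - 1)) • x - (‖y‖ ^ (p - 1)) • y‖ ≤
      ‖radialA n p (1 / p) x - radialA n p (1 / p) y‖ := by
  obtain ⟨hp0, hp1⟩ := hp
  have hA : ∀ z : EuclideanSpace ℝ (Fin n), radialA n p (1 / p) z =
      (if ‖z‖ ≤ 1 then ‖z‖ ^ (p - 1) else ‖z‖ ^ (1/p - 1)) • z := by
    intro z; rw [radialA]; split_ifs <;> simp
  rw [hA, hA]
  have hexp : p - 1 ≤ 1/p - 1 := by
    have : p ≤ 1/p := by rw [le_div_iff₀ hp0]; nlinarith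
    linarith
  have hmul : ∀ c : ℝ, 0 ≤ c → c ^ (p - 1) * c = c ^ p := by
    intro c hc
    rcases eq_or_lt_of_le hc with h | h
    · rw [← h, Real.zero_rpow (by linarith), Real.zero_rpow hp0.ne', zero_mul]
    · nth_rewrite 2 [← Real.rpow_one c]
      rw [← Real.rpow_add h]; ring_nf
  have hmul' : ∀ c : ℝ, 0 ≤ c → c ^ (1/p - 1) * c = c ^ (1/p) := by
    intro c hc
    rcases eq_or_lt_of_le hc with h | h
    · have h1p : (1:ℝ) < 1/p := by rw [lt_div_iff₀ hp0]; linarith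
      rw [← h, Real.zero_rpow (by linarith), Real.zero_rpow (by linarith), zero_mul]
    · nth_rewrite 2 [← Real.rpow_one c]
      rw [← Real.rpow_add h]; ring_nf
  apply ip_key x y _ _ _ _
    (Real.rpow_nonneg (norm_nonneg x) _) (Real.rpow_nonneg (norm_nonneg y) _)
  · split_ifs with h
    · exact le_rfl
    · exact Real.rpow_le_rpow_of_exponent_le (le_of_not_ge h) hexp
  · split_ifs with h
    · exact le_rfl
    · exact Real.rpow_le_rpow_of_exponent_le (le_of_not_ge h) hexp
  · have hx := norm_nonneg x
    have hy := norm_nonneg y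
    rw [hmul _ hx, hmul _ hy]
    have eif : ∀ c : ℝ, 0 ≤ c →
        (if c ≤ 1 then c ^ (p-1) else c ^ (1/p - 1)) * c =
        (if c ≤ 1 then c ^ p else c ^ (1/p)) := by
      intro c hc; split_ifs
      · exact hmul c hc
      · exact hmul' c hc
    rw [eif _ hx, eif _ hy]
    exact sq_key p ‖x‖ ‖y‖ hp0 hp1 hx hy
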